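/- Let z be a point of the hyperbolic upper half-plane ℍ and let a ∈ ℝ be a boundary point. Then the Busemann limit toward the boundary point a exists and equals log(((Re z − a)² + (Im z)²)/Im z): the function t ↦ dist(z, γ(t)) − t, where γ(t) is the point of ℍ with real part a and imaginary part e^{−t}, tends to log(((Re z − a)² + (Im z)²)/Im z) as t → +∞. -/

import Mathlib

open Real Filter Topology

/-- The Busemann limit on the hyperbolic upper half-plane toward a boundary point
`a ∈ ℝ`: with `γ(t)` the point with real part `a` and imaginary part `e⁻ᵗ` (a
unit-speed geodesic ray converging to `a`), one has
`dist(z, γ(t)) − t → log(((Re z − a)² + (Im z)²) / Im z)` as `t → ∞`. -/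
theorem busemann_limit_at_boundary_point (z : UpperHalfPlane) (a : ℝ) :
    Tendsto
      (fun t : ℝ =>
        dist z (⟨(a : ℂ) + (Real.exp (-t) : ℂ) * Complex.I, by
          simp only [Complex.add_im, Complex.ofReal_im, Complex.mul_I_im,
            Complex.ofReal_re, zero_add]
          exact Real.exp_pos (-t)⟩ : UpperHalfPlane) - t)
      atTop (𝓝 (Real.log (((z.re - a) ^ 2 + z.im ^ 2) / z.im))) := by
  have hy : 0 < z.im := z.im_pos
  set F : ℝ → ℝ := fun s =>
    (‖(z : ℂ) - (↑a + ↑s * Complex.I)‖ / (2 * Real.sqrt z.im)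
      + Real.sqrt (s + (‖(z : ℂ) - (↑a + ↑s * Complex.I)‖) ^ 2 / (4 * z.im))) ^ 2
    with hF
  have habs : Continuous fun s : ℝ => ‖(z : ℂ) - (↑a + ↑s * Complex.I)‖ := by
    apply continuous_norm.comp
    fun_prop
  have hFcont : Continuous F := by
    apply Continuous.pow
    apply Continuous.add
    · exact habs.div_const _
    · apply Real.continuous_sqrt.comp
      exact continuous_id.add ((habs.pow 2).div_const _)
  have hR : ‖(z : ℂ) - (↑a + ↑(0:ℝ) * Complex.I)‖ ^ 2
      = (z.re - a) ^ 2 + z.im ^ 2 := by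
    rw [Complex.sq_norm, Complex.normSq_apply]
    simp [UpperHalfPlane.coe_re, UpperHalfPlane.coe_im]
    ring
  have hF0 : F 0 = ((z.re - a) ^ 2 + z.im ^ 2) / z.im := by
    set R := ‖(z : ℂ) - (↑a + ↑(0:ℝ) * Complex.I)‖ with hRdef
    have hRnn : 0 ≤ R := norm_nonneg _
    have h4 : Real.sqrt (4 * z.im) = 2 * Real.sqrt z.im := by
      rw [show (4:ℝ) * z.im = (2 * Real.sqrt z.im) ^ 2 by
        rw [mul_pow, Real.sq_sqrt hy.le]; ring]
      exact Real.sqrt_sq (by positivity)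
    have : Real.sqrt ((0:ℝ) + R ^ 2 / (4 * z.im)) = R / (2 * Real.sqrt z.im) := by
      rw [zero_add, Real.sqrt_div (by positivity), Real.sqrt_sq hRnn, h4]
    rw [hF]
    simp only [← hRdef, this]
    rw [← hR]
    have hsy : Real.sqrt z.im ≠ 0 := by positivity
    field_simp
    rw [Real.sq_sqrt hy.le]
    ring
  have hF0pos : 0 < F 0 := by
    rw [hF0]; positivity
  have key : ∀ t : ℝ,
      dist z (⟨(a : ℂ) + (Real.exp (-t) : ℂ) * Complex.I, by
          simp only [Complex.add_im, Complex.ofReal_im, Complex.mul_I_im,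
            Complex.ofReal_re, zero_add]
          exact Real.exp_pos (-t)⟩ : UpperHalfPlane) - t
      = Real.log (F (Real.exp (-t))) := by
    intro t
    set s := Real.exp (-t) with hsdef
    have hs : 0 < s := Real.exp_pos _
    set w : UpperHalfPlane := ⟨(a : ℂ) + (s : ℂ) * Complex.I, by
      simp only [Complex.add_im, Complex.ofReal_im, Complex.mul_I_im,
        Complex.ofReal_re, zero_add]
      exact hs⟩ with hw
    have hwim : w.im = s := by
      simp [hw, UpperHalfPlane.im]
    set D := ‖(z : ℂ) - (↑a + ↑s * Complex.I)‖ with hD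
    have hDnn : 0 ≤ D := norm_nonneg _
    have hdc : dist (z : ℂ) (w : ℂ) = D := by
      rw [Complex.dist_eq]
    rw [UpperHalfPlane.dist_eq, hdc, hwim]
    set u := D / (2 * Real.sqrt (z.im * s)) with hu
    have hun : 0 ≤ u := by positivity
    have hsq : (0:ℝ) < Real.sqrt s := Real.sqrt_pos.mpr hs
    have hA : 0 < u + Real.sqrt (1 + u ^ 2) := by positivity
    rw [Real.arsinh]
    have ht : -t = Real.log s := by rw [hsdef, Real.log_exp]
    have hlp : (2:ℝ) * Real.log (u + Real.sqrt (1 + u ^ 2))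
        = Real.log ((u + Real.sqrt (1 + u ^ 2)) ^ 2) := by
      rw [Real.log_pow]; norm_num
    rw [show F (Real.exp (-t)) = F s from rfl, sub_eq_add_neg, ht, hlp,
      ← Real.log_mul (by positivity) hs.ne']
    congr 1
    -- show (u + √(1+u²))^2 * s = F s
    have h1 : u * Real.sqrt s = D / (2 * Real.sqrt z.im) := by
      rw [hu, Real.sqrt_mul hy.le]
      field_simp
    have h2 : (1 + u ^ 2) * s = s + D ^ 2 / (4 * z.im) := by
      have hu2 : u ^ 2 = D ^ 2 / (4 * (z.im * s)) := by
        rw [hu, div_pow, mul_pow, Real.sq_sqrt (by positivity)]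
        norm_num
      rw [hu2]
      field_simp
    calc (u + Real.sqrt (1 + u ^ 2)) ^ 2 * s
        = ((u + Real.sqrt (1 + u ^ 2)) * Real.sqrt s) ^ 2 := by
          rw [mul_pow, Real.sq_sqrt hs.le]
      _ = (u * Real.sqrt s + Real.sqrt ((1 + u ^ 2) * s)) ^ 2 := by
          rw [add_mul, Real.sqrt_mul (by positivity) s]
      _ = F s := by rw [h1, h2, hD]
  have h1 : Tendsto (fun t : ℝ => Real.exp (-t)) atTop (𝓝 0) :=
    Real.tendsto_exp_atBot.comp tendsto_neg_atTop_atBot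
  have h2 : Tendsto (fun t : ℝ => F (Real.exp (-t))) atTop (𝓝 (F 0)) :=
    (hFcont.continuousAt.tendsto).comp h1
  have h3 : Tendsto (fun t : ℝ => Real.log (F (Real.exp (-t)))) atTop
      (𝓝 (Real.log (F 0))) :=
    ((Real.continuousAt_log hF0pos.ne').tendsto).comp h2
  rw [← hF0]
  exact h3.congr fun t => (key t).symm
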